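/- Let s ≥ 1, m > 3, T > 0 and define ρ(t) = s^{1/2 − 1/m}·λ·e^{−sφ*(t)}·(ξ*(t))^{1/2 − 1/m} on (0,T), where ξ*(t) = A/(t^m(T−t)^m) for a constant A ≥ 1 and φ*(t) = K·ξ*(t)/A for a constant K > 0 with K ≥ 1. Then ρ extends continuously by 0 to t = 0 and t = T, and there is a constant C(m,K,A) such that |ρ'(t)| ≤ C·T·s^{3/2 − 1/m}·λ·e^{−sφ*(t)}·(ξ*(t))^{3/2} for all t ∈ (0,T), provided s ≥ C·T^m. -/

import Mathlib

open Real Set Filter Topology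

set_option maxHeartbeats 1000000

/-- Derivative estimate on the auxiliary weight
`ρ(t) = s^{1/2−1/m}·λ·e^{−sφ*(t)}·(ξ*(t))^{1/2−1/m}` with `ξ*(t) = A/(tᵐ(T−t)ᵐ)`,
`φ* = K·ξ*/A`: `ρ` extends continuously by `0` to the endpoints, and
`|ρ'(t)| ≤ C·T·s^{3/2−1/m}·λ·e^{−sφ*(t)}·(ξ*(t))^{3/2}` provided `s ≥ C·Tᵐ`. -/
theorem auxiliary_weight_derivative_bound
    (T A K m : ℝ) (hT : 0 < T) (hA : 1 ≤ A) (hK : 1 ≤ K) (hm : 3 < m) :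
    ∃ C : ℝ, 0 < C ∧
      ∀ s lam : ℝ, 1 ≤ s → 0 < lam → C * T ^ m ≤ s →
        ∀ ξs φs ρ : ℝ → ℝ,
          (∀ t, ξs t = A / (t ^ m * (T - t) ^ m)) →
          (∀ t, φs t = K * ξs t / A) →
          (∀ t, ρ t = s ^ ((1:ℝ) / 2 - 1 / m) * lam * Real.exp (-(s * φs t)) *
            ξs t ^ ((1:ℝ) / 2 - 1 / m)) →
          Tendsto ρ (nhdsWithin 0 (Ioi 0)) (nhds 0) ∧
          Tendsto ρ (nhdsWithin T (Iio T)) (nhds 0) ∧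
          (∀ t ∈ Ioo (0:ℝ) T,
            |deriv ρ t| ≤ C * T * s ^ ((3:ℝ) / 2 - 1 / m) * lam *
              Real.exp (-(s * φs t)) * ξs t ^ ((3:ℝ) / 2)) := by
  have hm0 : (0:ℝ) < m := by linarith
  have hm1 : (1:ℝ) ≤ m := by linarith
  have hA0 : (0:ℝ) < A := by linarith
  have hK0 : (0:ℝ) < K := by linarith
  have hT2m : (0:ℝ) < T ^ (2*m) := Real.rpow_pos_of_pos hT _
  refine ⟨m * (T ^ (2*m) + K) + 1, by nlinarith, ?_⟩
  intro s lam hs hlam hsC ξs φs ρ hξe hφe hρe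
  have hs0 : (0:ℝ) < s := by linarith
  have hξf : ξs = fun t => A / (t ^ m * (T - t) ^ m) := funext hξe
  subst hξf
  have hφf : φs = fun t => K * (A / (t ^ m * (T - t) ^ m)) / A := funext hφe
  subst hφf
  have hρf : ρ = fun t => s ^ ((1:ℝ) / 2 - 1 / m) * lam *
      Real.exp (-(s * (K * (A / (t ^ m * (T - t) ^ m)) / A))) *
      (A / (t ^ m * (T - t) ^ m)) ^ ((1:ℝ) / 2 - 1 / m) := funext hρe
  subst hρf
  have hp0 : (0:ℝ) < 1/2 - 1/m := by
    have : (1:ℝ)/m < 1/2 := by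
      rw [div_lt_div_iff₀ hm0 (by norm_num : (0:ℝ) < 2)]; linarith
    linarith
  -- the composed limit lemma
  have hcomp : Tendsto (fun x : ℝ => x ^ ((1:ℝ)/2 - 1/m) * Real.exp (-(s*K/A) * x))
      atTop (𝓝 0) :=
    tendsto_rpow_mul_exp_neg_mul_atTop_nhds_zero _ _ (by positivity)
  have key : ∀ l : Filter ℝ,
      Tendsto (fun t : ℝ => t ^ m * (T - t) ^ m) l (𝓝[>] (0:ℝ)) →
      Tendsto (fun t => s ^ ((1:ℝ) / 2 - 1 / m) * lam *
        Real.exp (-(s * (K * (A / (t ^ m * (T - t) ^ m)) / A))) *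
        (A / (t ^ m * (T - t) ^ m)) ^ ((1:ℝ) / 2 - 1 / m)) l (𝓝 0) := by
    intro l hden
    have hξtop : Tendsto (fun t : ℝ => A / (t ^ m * (T - t) ^ m)) l atTop := by
      have h2 : Tendsto (fun t : ℝ => (t ^ m * (T - t) ^ m)⁻¹) l atTop :=
        tendsto_inv_nhdsGT_zero.comp hden
      simpa [div_eq_mul_inv] using h2.const_mul_atTop hA0
    have h3 := (hcomp.comp hξtop).const_mul (s ^ ((1:ℝ)/2 - 1/m) * lam)
    rw [mul_zero] at h3
    refine h3.congr fun t => ?_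
    have hAne : A ≠ 0 := hA0.ne'
    simp only [Function.comp_apply]
    rw [show -(s*K/A) * (A / (t ^ m * (T - t) ^ m)) =
        -(s * (K * (A / (t ^ m * (T - t) ^ m)) / A)) by field_simp]
    ring
  constructor
  · -- limit at 0+
    refine key _ ?_
    rw [tendsto_nhdsWithin_iff]
    constructor
    · have h1 : ContinuousAt (fun t : ℝ => t ^ m * (T - t) ^ m) 0 := by
        apply ContinuousAt.mul
        · exact Real.continuousAt_rpow_const 0 m (Or.inr hm0.le)
        · exact (Real.continuousAt_rpow_const (T - 0) m
            (Or.inl (by simpa using hT.ne'))).comp (continuousAt_const.sub continuousAt_id)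
      have h2 := h1.tendsto.mono_left (nhdsWithin_le_nhds (s := Ioi (0:ℝ)))
      simpa [Real.zero_rpow hm0.ne'] using h2
    · filter_upwards [Ioo_mem_nhdsGT_of_mem (left_mem_Ico.mpr hT)] with t ht
      exact mul_pos (Real.rpow_pos_of_pos ht.1 m) (Real.rpow_pos_of_pos (sub_pos.mpr ht.2) m)
  constructor
  · -- limit at T-
    refine key _ ?_
    rw [tendsto_nhdsWithin_iff]
    constructor
    · have h1 : ContinuousAt (fun t : ℝ => t ^ m * (T - t) ^ m) T := by
        apply ContinuousAt.mul
        · exact Real.continuousAt_rpow_const T m (Or.inl hT.ne')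
        · exact (Real.continuousAt_rpow_const (T - T) m (Or.inr hm0.le)).comp
            (continuousAt_const.sub continuousAt_id)
      have h2 := h1.tendsto.mono_left (nhdsWithin_le_nhds (s := Iio T))
      simpa [Real.zero_rpow hm0.ne'] using h2
    · filter_upwards [Ioo_mem_nhdsLT_of_mem (right_mem_Ioc.mpr hT)] with t ht
      exact mul_pos (Real.rpow_pos_of_pos ht.1 m) (Real.rpow_pos_of_pos (sub_pos.mpr ht.2) m)
  -- derivative bound
  intro t ht
  obtain ⟨ht0, htT⟩ := ht
  have hv0 : (0:ℝ) < T - t := sub_pos.mpr htT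
  have hG0 : (0:ℝ) < t ^ m * (T - t) ^ m :=
    mul_pos (Real.rpow_pos_of_pos ht0 m) (Real.rpow_pos_of_pos hv0 m)

  -- abbreviations
  set p : ℝ := (1:ℝ)/2 - 1/m with hpdef
  set c : ℝ := s ^ p * lam with hcdef
  -- derivatives
  have hdu : HasDerivAt (fun x : ℝ => x ^ m) (m * t ^ (m-1)) t :=
    Real.hasDerivAt_rpow_const (Or.inr hm1)
  have hdv : HasDerivAt (fun x : ℝ => (T - x) ^ m) (m * (T-t) ^ (m-1) * -1) t := by
    have h1 : HasDerivAt (fun x : ℝ => T - x) (-1) t := (hasDerivAt_id t).const_sub T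
    exact (Real.hasDerivAt_rpow_const (x := T - t) (p := m) (Or.inr hm1)).comp t h1
  set G' : ℝ := m * t^(m-1) * (T-t)^m + t^m * (m * (T-t)^(m-1) * -1) with hG'def
  have hdG : HasDerivAt (fun x : ℝ => x ^ m * (T - x) ^ m) G' t := hdu.mul hdv
  set D : ℝ := (0 * (t^m * (T-t)^m) - A * G') / (t^m * (T-t)^m)^2 with hDdef
  have hdξ : HasDerivAt (fun x : ℝ => A / (x ^ m * (T - x) ^ m)) D t :=
    (hasDerivAt_const t A).div hdG hG0.ne'
  have hdφ : HasDerivAt (fun x : ℝ => K * (A / (x ^ m * (T - x) ^ m)) / A) (K * D / A) t :=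
    (hdξ.const_mul K).div_const A
  have hdexp : HasDerivAt
      (fun x : ℝ => Real.exp (-(s * (K * (A / (x ^ m * (T - x) ^ m)) / A))))
      (Real.exp (-(s * (K * (A / (t ^ m * (T - t) ^ m)) / A))) * -(s * (K * D / A))) t :=
    ((hdφ.const_mul s).neg).exp
  have hX0 : (0:ℝ) < A / (t ^ m * (T - t) ^ m) := div_pos hA0 hG0
  have hdρ : HasDerivAt
      (fun x : ℝ => c * Real.exp (-(s * (K * (A / (x ^ m * (T - x) ^ m)) / A))) *
        (A / (x ^ m * (T - x) ^ m)) ^ p)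
      ((c * (Real.exp (-(s * (K * (A / (t ^ m * (T - t) ^ m)) / A))) * -(s * (K * D / A)))) *
        (A / (t ^ m * (T - t) ^ m)) ^ p +
       (c * Real.exp (-(s * (K * (A / (t ^ m * (T - t) ^ m)) / A)))) *
        (D * p * (A / (t ^ m * (T - t) ^ m)) ^ (p - 1))) t :=
    (hdexp.const_mul c).mul (hdξ.rpow_const (Or.inl hX0.ne'))
  have hderiv := hdρ.deriv
  set G : ℝ := t ^ m * (T - t) ^ m with hGdef
  set X : ℝ := A / G with hXdef
  set E : ℝ := Real.exp (-(s * (K * X / A))) with hEdef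
  rw [hderiv]
  have hE0 : (0:ℝ) < E := Real.exp_pos _
  have hc0 : (0:ℝ) < c := mul_pos (Real.rpow_pos_of_pos hs0 p) hlam
  -- bound on |G'|
  have htm : t ^ (m-1) = t ^ m / t := by rw [Real.rpow_sub ht0, Real.rpow_one]
  have hvm : (T-t) ^ (m-1) = (T-t) ^ m / (T-t) := by rw [Real.rpow_sub hv0, Real.rpow_one]
  have hG'eq : G' = m * (G / (t*(T-t))) * ((T-t) - t) := by
    rw [hG'def, htm, hvm, hGdef]; field_simp; ring
  have hG'abs : |G'| ≤ m * T * G / (t * (T-t)) := by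
    calc |G'| = m * (G/(t*(T-t))) * |T - t - t| := by
          rw [hG'eq, abs_mul, abs_of_nonneg (by positivity)]
      _ ≤ m * (G/(t*(T-t))) * T := by
          apply mul_le_mul_of_nonneg_left _ (by positivity)
          exact abs_le.mpr ⟨by linarith, by linarith⟩
      _ = m * T * G / (t * (T-t)) := by ring
  have hDabs : |D| ≤ m * T * A / (G * (t * (T-t))) := by
    have h1 : |D| = A * |G'| / G^2 := by
      rw [hDdef, hGdef, abs_div]
      congr 1
      · rw [show (0:ℝ) * G - A * G' = -(A * G') by ring, abs_neg, abs_mul, abs_of_pos hA0]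
      · exact abs_of_pos (by positivity)
    rw [h1]
    calc A * |G'| / G^2 ≤ A * (m * T * G / (t * (T-t))) / G^2 := by gcongr
      _ = m * T * A / (G * (t * (T-t))) := by field_simp
  -- X-power identities
  have hGm : G = (t*(T-t))^m := by rw [hGdef, Real.mul_rpow ht0.le hv0.le]
  have hG1m : G ^ ((1:ℝ)/m) = t*(T-t) := by
    rw [hGm, ← Real.rpow_mul (by positivity),
      show m * ((1:ℝ)/m) = 1 by field_simp, Real.rpow_one]
  have hG1 : G ^ ((1:ℝ)+1/m) = G * (t*(T-t)) := by
    rw [Real.rpow_add hG0, Real.rpow_one, hG1m]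
  have hXpow : X ^ ((1:ℝ)+1/m) = A ^ ((1:ℝ)+1/m) / (G * (t * (T-t))) := by
    rw [hXdef, Real.div_rpow hA0.le hG0.le, hG1]
  have hAle : A ≤ A ^ ((1:ℝ)+1/m) := by
    have h1 : (0:ℝ) < 1/m := by positivity
    calc A = A ^ (1:ℝ) := (Real.rpow_one A).symm
      _ ≤ A ^ ((1:ℝ)+1/m) := Real.rpow_le_rpow_of_exponent_le hA (by linarith)
  have hDX : |D| ≤ m * T * X ^ ((1:ℝ)+1/m) := by
    calc |D| ≤ m * T * A / (G * (t * (T-t))) := hDabs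
      _ ≤ m * T * A ^ ((1:ℝ)+1/m) / (G * (t * (T-t))) := by gcongr
      _ = m * T * X ^ ((1:ℝ)+1/m) := by rw [hXpow]; ring
  have hXpos : (0:ℝ) < X := hX0
  have hXa : X ^ p * X ^ ((1:ℝ)+1/m) = X ^ ((3:ℝ)/2) := by
    rw [← Real.rpow_add hXpos]; congr 1; rw [hpdef]; ring
  have hXb : X ^ (p-1) * X ^ ((1:ℝ)+1/m) = X ^ ((1:ℝ)/2) := by
    rw [← Real.rpow_add hXpos]; congr 1; rw [hpdef]; ring
  have h32 : X ^ ((3:ℝ)/2) = X ^ ((1:ℝ)/2) * X := by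
    rw [show (3:ℝ)/2 = 1/2 + 1 by norm_num, Real.rpow_add hXpos, Real.rpow_one]
  have hGle : G ≤ T ^ (2*m) := by
    rw [hGm]
    calc (t*(T-t))^m ≤ (T*T)^m := Real.rpow_le_rpow (by positivity) (mul_le_mul htT.le (by linarith) hv0.le hT.le) hm0.le
      _ = T^(2*m) := by rw [Real.rpow_mul hT.le, Real.rpow_two, sq]
  have hXT : 1 ≤ T ^ (2*m) * X := by
    have h1 : G ≤ T ^ (2*m) * A :=
      le_trans hGle (le_mul_of_one_le_right hT2m.le hA)
    calc (1:ℝ) = G / G := (div_self hG0.ne').symm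
      _ ≤ T ^ (2*m) * A / G := by gcongr
      _ = T ^ (2*m) * X := by rw [hXdef]; ring
  have hXc : X ^ ((1:ℝ)/2) ≤ T ^ (2*m) * X ^ ((3:ℝ)/2) := by
    calc X ^ ((1:ℝ)/2) = X ^ ((1:ℝ)/2) * 1 := (mul_one _).symm
      _ ≤ X ^ ((1:ℝ)/2) * (T ^ (2*m) * X) :=
          mul_le_mul_of_nonneg_left hXT (by positivity)
      _ = T ^ (2*m) * X ^ ((3:ℝ)/2) := by rw [h32]; ring
  have hs32 : s ^ ((3:ℝ)/2 - 1/m) = s * s ^ p := by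
    rw [show (3:ℝ)/2 - 1/m = 1 + p by rw [hpdef]; ring, Real.rpow_add hs0, Real.rpow_one]
  have hp1 : p ≤ 1 := by
    have h1 : (0:ℝ) < 1/m := by positivity
    rw [hpdef]; linarith
  have hXp : (0:ℝ) < X ^ p := Real.rpow_pos_of_pos hXpos p
  have hXpm : (0:ℝ) < X ^ (p-1) := Real.rpow_pos_of_pos hXpos (p-1)
  -- the two terms
  have hterm1 : |c * (E * -(s * (K * D / A))) * X ^ p| ≤ m * K * T * (s * c) * E * X ^ ((3:ℝ)/2) := by
    have h1 : |c * (E * -(s * (K * D / A))) * X ^ p| = c * E * s * (K/A) * |D| * X ^ p := by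
      simp only [abs_mul, abs_neg, abs_div, abs_of_pos hc0, abs_of_pos hE0, abs_of_pos hs0,
        abs_of_pos hK0, abs_of_pos hA0, abs_of_pos hXp]
      ring
    rw [h1]
    have hKA : K / A ≤ K := div_le_self hK0.le hA
    calc c * E * s * (K/A) * |D| * X ^ p
        ≤ c * E * s * K * (m * T * X ^ ((1:ℝ)+1/m)) * X ^ p := by gcongr
      _ = m * K * T * (s * c) * E * X ^ ((3:ℝ)/2) := by rw [← hXa]; ring
  have hterm2 : |c * E * (D * p * X ^ (p-1))| ≤ m * T ^ (2*m) * T * (s * c) * E * X ^ ((3:ℝ)/2) := by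
    have h1 : |c * E * (D * p * X ^ (p-1))| = c * E * (|D| * p * X ^ (p-1)) := by
      simp only [abs_mul, abs_of_pos hc0, abs_of_pos hE0, abs_of_pos hp0, abs_of_pos hXpm]
    rw [h1]
    calc c * E * (|D| * p * X ^ (p-1))
        ≤ c * E * ((m * T * X ^ ((1:ℝ)+1/m)) * p * X ^ (p-1)) := by gcongr
      _ = c * E * (m * T) * p * X ^ ((1:ℝ)/2) := by rw [← hXb]; ring
      _ ≤ c * E * (m * T) * 1 * (T ^ (2*m) * X ^ ((3:ℝ)/2)) := by
          apply mul_le_mul (by gcongr) hXc (by positivity) (by positivity)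
      _ ≤ (c * E * (m * T) * 1 * (T ^ (2*m) * X ^ ((3:ℝ)/2))) * s :=
          le_mul_of_one_le_right (by positivity) hs
      _ = m * T ^ (2*m) * T * (s * c) * E * X ^ ((3:ℝ)/2) := by ring
  calc |c * (E * -(s * (K * D / A))) * X ^ p + c * E * (D * p * X ^ (p-1))|
      ≤ |c * (E * -(s * (K * D / A))) * X ^ p| + |c * E * (D * p * X ^ (p-1))| := abs_add_le _ _
    _ ≤ m * K * T * (s * c) * E * X ^ ((3:ℝ)/2) + m * T ^ (2*m) * T * (s * c) * E * X ^ ((3:ℝ)/2) :=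
        add_le_add hterm1 hterm2
    _ = (m * (T ^ (2*m) + K)) * T * (s * c) * E * X ^ ((3:ℝ)/2) := by ring
    _ = (m * (T ^ (2*m) + K)) * (T * (s * c) * E * X ^ ((3:ℝ)/2)) := by ring
    _ ≤ (m * (T ^ (2*m) + K) + 1) * (T * (s * c) * E * X ^ ((3:ℝ)/2)) :=
        mul_le_mul_of_nonneg_right (by linarith) (by positivity)
    _ = (m * (T ^ (2*m) + K) + 1) * T * (s * c) * E * X ^ ((3:ℝ)/2) := by ring
    _ = (m * (T ^ (2*m) + K) + 1) * T * s ^ ((3:ℝ)/2 - 1/m) * lam * E * X ^ ((3:ℝ)/2) := by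
        rw [hs32, hcdef]; ring
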